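/- Let β be real with β > 0 and β ≠ 1 and let y > 0. Then for all reals x > 0 and x′ > 0, d̂_β(y, x) ≤ d̂_β(y, x′) + ([β<1]·(x′)^(β−1) − [β>2]·y·(x′)^(β−2))·(x − x′); that is, the concave part of the β-divergence lies below its tangent line at x′. -/

import Mathlib

open Real

/-- The concave part `d̂_β(y, x) = [β<1]·x^β/β − [β>2]·y·x^(β−1)/(β−1)`. -/
noncomputable def betaDivHat (β y x : ℝ) : ℝ :=
  (if β < 1 then x ^ β / β else 0) - (if 2 < β then y * x ^ (β - 1) / (β - 1) else 0)

/-- The concave part of the β-divergence lies below its tangent line at `x′`: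
`d̂_β(y, x) ≤ d̂_β(y, x′) + ([β<1]·(x′)^(β−1) − [β>2]·y·(x′)^(β−2))·(x − x′)`. -/
theorem betaDivHat_le_tangent (β : ℝ) (hβ : 0 < β) (hβ1 : β ≠ 1) (y : ℝ) (hy : 0 < y)
    (x x' : ℝ) (hx : 0 < x) (hx' : 0 < x') :
    betaDivHat β y x
      ≤ betaDivHat β y x'
        + ((if β < 1 then x' ^ (β - 1) else 0) - (if 2 < β then y * x' ^ (β - 2) else 0))
          * (x - x') := by
  have hs : (-1 : ℝ) ≤ x / x' - 1 := by
    have : 0 < x / x' := div_pos hx hx'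
    linarith
  have h1s : 1 + (x / x' - 1) = x / x' := by ring
  have hxb : x' ^ β * (x / x') ^ β = x ^ β := by
    rw [← Real.mul_rpow hx'.le (div_pos hx hx').le, mul_div_cancel₀ _ hx'.ne']
  have hx1b : x' ^ (β - 1) * (x / x') ^ (β - 1) = x ^ (β - 1) := by
    rw [← Real.mul_rpow hx'.le (div_pos hx hx').le, mul_div_cancel₀ _ hx'.ne']
  have hsub1 : x' ^ (β - 1) = x' ^ β / x' := by
    rw [Real.rpow_sub hx', Real.rpow_one]
  have hsub2 : x' ^ (β - 2) = x' ^ (β - 1) / x' := by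
    rw [show β - 2 = β - 1 - 1 by ring, Real.rpow_sub hx', Real.rpow_one]
  unfold betaDivHat
  rcases lt_trichotomy β 1 with h1 | h1 | h1
  · have h2 : ¬ (2 < β) := by linarith
    simp only [if_pos h1, if_neg h2]
    have key : (x / x') ^ β ≤ 1 + β * (x / x' - 1) := by
      have := rpow_one_add_le_one_add_mul_self hs hβ.le h1.le
      rwa [h1s] at this
    have hpos : (0 : ℝ) < x' ^ β := Real.rpow_pos_of_pos hx' β
    have key2 : x ^ β ≤ x' ^ β * (1 + β * (x / x' - 1)) := by
      rw [← hxb]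
      exact mul_le_mul_of_nonneg_left key hpos.le
    have h3 : x ^ β / β ≤ x' ^ β * (1 + β * (x / x' - 1)) / β := by gcongr
    have heq : x' ^ β * (1 + β * (x / x' - 1)) / β
        = x' ^ β / β + x' ^ β / x' * (x - x') := by
      field_simp
    rw [hsub1]
    rw [heq] at h3
    linarith
  · exact absurd h1 hβ1
  · have h1' : ¬ (β < 1) := by linarith
    by_cases h2 : 2 < β
    · simp only [if_neg h1', if_pos h2]
      have hp : (1 : ℝ) ≤ β - 1 := by linarith
      have hb1 : (0 : ℝ) < β - 1 := by linarith
      have key : 1 + (β - 1) * (x / x' - 1) ≤ (x / x') ^ (β - 1) := by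
        have := one_add_mul_self_le_rpow_one_add hs hp
        rwa [h1s] at this
      have hpos : (0 : ℝ) < x' ^ (β - 1) := Real.rpow_pos_of_pos hx' _
      have key2 : x' ^ (β - 1) * (1 + (β - 1) * (x / x' - 1)) ≤ x ^ (β - 1) := by
        rw [← hx1b]
        exact mul_le_mul_of_nonneg_left key hpos.le
      have h3 : y * (x' ^ (β - 1) * (1 + (β - 1) * (x / x' - 1))) / (β - 1)
          ≤ y * x ^ (β - 1) / (β - 1) := by gcongr
      have heq : y * (x' ^ (β - 1) * (1 + (β - 1) * (x / x' - 1))) / (β - 1)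
          = y * x' ^ (β - 1) / (β - 1) + y * (x' ^ (β - 1) / x') * (x - x') := by
        field_simp
      rw [hsub2]
      rw [heq] at h3
      linarith
    · simp only [if_neg h1', if_neg h2]
      simp
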